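/- Let n = 2s + e with s ≥ 1 and e ≥ 1 and e ≤ n, and let w : I → ℕ be the position on an index set I of size n with w(i) = 1 for every i ∈ I (the starting position). Then the 2-adic valuation of δ_e^(e)(w) equals B(s), the number of ones in the binary expansion of s; equivalently SW_e(w) = e + B(s). -/

import Mathlib

open Finset

/-- The weight of a subposition `S` of the position `w : I → ℕ`. -/
def wtS {I : Type*} [Fintype I] [DecidableEq I] (w : I → ℕ) (S : Finset I) : ℕ :=
  ∑ i ∈ S, w i

/-- The Saks–Werman statistic `δ_e(w) = ∑_{S ⊆ I, ε(S) ≥ e} (-1)^{wt S}` where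
`ε(S) = wt(I \ S) - wt(S)`. -/
def delta {I : Type*} [Fintype I] [DecidableEq I] (w : I → ℕ) (e : ℕ) : ℤ :=
  ∑ S ∈ Finset.univ.filter
      (fun S : Finset I => (e : ℤ) ≤ (wtS w Sᶜ : ℤ) - (wtS w S : ℤ)),
    (-1) ^ (wtS w S)

/-- The iterated statistic `δ_e^(b)`: `δ_e^(1) = δ_e` and for `b ≥ 2`,
`δ_e^(b) = ∑_{t ≥ 0} δ_{e+2t}^(b-1)`, a finite sum since `δ_d = 0` for `d > wt(I)`
(so summing `t` over `0, …, wt(I)` suffices).  (The value at `b = 0` is junk.) -/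
def deltaIt {I : Type*} [Fintype I] [DecidableEq I] (w : I → ℕ) : ℕ → ℕ → ℤ
  | 0, e => delta w e
  | 1, e => delta w e
  | (b+2), e => ∑ t ∈ Finset.range ((∑ i, w i) + 1), deltaIt w (b+1) (e + 2*t)

/-- `B m` is the number of ones in the binary expansion of `m`. -/
def binaryWeight (m : ℕ) : ℕ := (Nat.digits 2 m).count 1

/-- Partial alternating sums of binomial coefficients. -/
theorem altsum (M m : ℕ) :
    ∑ j ∈ range (m+1), (-1:ℤ)^j * ((M+1).choose j) = (-1)^m * (M.choose m) := by
  induction m with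
  | zero => simp
  | succ m ih =>
      rw [Finset.sum_range_succ, ih, Nat.choose_succ_succ]
      push_cast
      ring

theorem sum_if_le (n m : ℕ) (hmn : m ≤ n) (f : ℕ → ℤ) :
    ∑ k ∈ range (n+1), (if k ≤ m then f k else 0) = ∑ k ∈ range (m+1), f k := by
  rw [← Finset.sum_filter]
  apply Finset.sum_congr _ (fun _ _ => rfl)
  ext k
  simp only [Finset.mem_filter, Finset.mem_range]
  omega

theorem count_one_eq_sum (l : List ℕ) (h : ∀ x ∈ l, x < 2) : l.count 1 = l.sum := by
  induction l with
  | nil => simp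
  | cons a t ih =>
      have ha : a < 2 := h a (by simp)
      have ht : t.count 1 = t.sum := ih (fun x hx => h x (by simp [hx]))
      interval_cases a <;> simp [List.count_cons, ht] <;> omega

/-- The 2-adic valuation of `±(2s).choose s` is the binary weight of `s`. -/
theorem val_central (s : ℕ) (hs : 1 ≤ s) :
    emultiplicity (2:ℤ) ((-1)^s * ((2*s).choose s : ℤ)) = ((Nat.digits 2 s).count 1 : ℕ∞) := by
  rw [show (2:ℤ) = ((2:ℕ):ℤ) by norm_num, ← Int.emultiplicity_natAbs]
  have h1 : ((-1:ℤ)^s * ((2*s).choose s : ℤ)).natAbs = (2*s).choose s := by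
    rw [Int.natAbs_mul]
    simp [Int.natAbs_pow]
  rw [h1]
  have hpos : 0 < (2*s).choose s := Nat.choose_pos (by omega)
  haveI : Fact (Nat.Prime 2) := ⟨Nat.prime_two⟩
  rw [← padicValNat_eq_emultiplicity hpos.ne']
  congr 1
  rw [count_one_eq_sum _ (fun _ hx => Nat.digits_lt_base (by norm_num) hx)]
  have key := sub_one_mul_padicValNat_choose_eq_sub_sum_digits' (p := 2) (k := s) (n := s)
  have hdig : (Nat.digits 2 (s + s)).sum = (Nat.digits 2 s).sum := by
    rw [Nat.digits_def' (by norm_num : 1 < 2) (by omega : 0 < s + s)]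
    have : (s + s) % 2 = 0 := by omega
    have h2 : (s + s) / 2 = s := by omega
    simp [this, h2]
  rw [hdig] at key
  have h2 : 2 * s = s + s := by ring
  rw [h2]
  omega

section
variable {I : Type*} [Fintype I] [DecidableEq I] {w : I → ℕ} (hw : ∀ i, w i = 1)
include hw

theorem wtS_eq (S : Finset I) : wtS w S = S.card := by
  unfold wtS; rw [Finset.sum_congr rfl (fun i _ => hw i), Finset.sum_const, smul_eq_mul, mul_one]

theorem delta_eq (d : ℕ) :
    delta w d = ∑ k ∈ range (Fintype.card I + 1),
      if (d:ℤ) + 2*k ≤ Fintype.card I then (-1:ℤ)^k * ((Fintype.card I).choose k) else 0 := by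
  unfold delta
  have h1 : ∀ S : Finset I,
      ((d : ℤ) ≤ (wtS w Sᶜ : ℤ) - (wtS w S : ℤ)) ↔ ((d:ℤ) + 2*S.card ≤ Fintype.card I) := by
    intro S
    rw [wtS_eq hw, wtS_eq hw, Finset.card_compl]
    have hle : S.card ≤ Fintype.card I := Finset.card_le_univ S
    push_cast [Nat.cast_sub hle]
    constructor <;> intro <;> linarith
  rw [Finset.sum_congr (Finset.filter_congr (fun S _ => by rw [h1 S]))
    (fun S _ => by rw [wtS_eq hw])]
  rw [Finset.sum_filter]
  have h2 : (Finset.univ : Finset (Finset I)) = (Finset.univ : Finset I).powerset := by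
    rw [Finset.powerset_univ]
  rw [h2, Finset.sum_powerset_apply_card
    (f := fun k => if (d:ℤ) + 2*k ≤ Fintype.card I then (-1:ℤ)^k else 0)]
  rw [Finset.card_univ]
  refine Finset.sum_congr rfl fun k _ => ?_
  split_ifs <;> simp [mul_comm]

theorem deltaIt_closed (n s e : ℕ) (hcard : Fintype.card I = n) (hn : n = 2*s+e)
    (he : 1 ≤ e) (hen : e ≤ n) :
    ∀ b, 1 ≤ b → b ≤ e → ∀ u, deltaIt w b (e+2*u) =
      if u ≤ s then (-1:ℤ)^(s-u) * ((n-b).choose (s-u)) else 0 := by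
  intro b
  induction b with
  | zero => omega
  | succ b ih =>
    intro _ hbe u
    match b, ih with
    | 0, _ =>
      show delta w (e + 2*u) = _
      rw [delta_eq hw, hcard]
      have hcond : ∀ k, ((e + 2*u : ℕ):ℤ) + 2*(k:ℕ) ≤ (n:ℤ) ↔ u + k ≤ s := by
        intro k
        push_cast
        omega
      rw [Finset.sum_congr rfl (fun k _ => by rw [if_congr (hcond k) rfl rfl])]
      by_cases hus : u ≤ s
      · rw [if_pos hus]
        rw [Finset.sum_congr rfl
          (fun k _ => if_congr (by omega : (u + k ≤ s) ↔ (k ≤ s - u)) rfl rfl)]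
        rw [sum_if_le n (s-u) (by omega) _]
        have hN : n = (n - 1) + 1 := by omega
        conv_lhs => rw [hN]
        rw [altsum (n-1) (s-u)]
      · rw [if_neg hus]
        apply Finset.sum_eq_zero
        intro k _
        rw [if_neg (by omega)]
    | (b+1), ih =>
      have key : ∀ e', deltaIt w (b+1+1) e' =
          ∑ t ∈ Finset.range ((∑ i, w i) + 1), deltaIt w (b+1) (e' + 2*t) := fun _ => rfl
      rw [key]
      have hsum : (∑ i, w i) = n := by
        rw [Finset.sum_congr rfl (fun i _ => hw i), Finset.sum_const, smul_eq_mul, mul_one,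
          Finset.card_univ, hcard]
      rw [hsum]
      have step : ∀ t, deltaIt w (b+1) (e + 2*u + 2*t) =
          if u + t ≤ s then (-1:ℤ)^(s-(u+t)) * ((n-(b+1)).choose (s-(u+t))) else 0 := by
        intro t
        have : e + 2*u + 2*t = e + 2*(u+t) := by ring
        rw [this, ih (by omega) (by omega) (u+t)]
      rw [Finset.sum_congr rfl (fun t _ => step t)]
      by_cases hus : u ≤ s
      · rw [if_pos hus]
        rw [Finset.sum_congr rfl
          (fun t _ => if_congr (by omega : (u + t ≤ s) ↔ (t ≤ s - u)) rfl rfl)]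
        rw [sum_if_le n (s-u) (by omega)
          (fun t => (-1:ℤ)^(s-(u+t)) * ((n-(b+1)).choose (s-(u+t))))]
        have hrefl := Finset.sum_range_reflect
          (fun j => (-1:ℤ)^j * ((n-(b+1)).choose j)) (s-u+1)
        have heq : ∀ t ∈ range (s-u+1),
            (-1:ℤ)^(s-(u+t)) * ((n-(b+1)).choose (s-(u+t)))
            = (fun j => (-1:ℤ)^j * ((n-(b+1)).choose j)) (s-u+1-1-t) := by
          intro t ht
          simp only [Finset.mem_range] at ht
          have : s - (u+t) = s-u+1-1-t := by omega
          rw [this]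
        rw [Finset.sum_congr rfl heq, hrefl]
        have hN : n - (b+1) = (n - (b+1+1)) + 1 := by omega
        rw [hN, altsum (n-(b+1+1)) (s-u)]
      · rw [if_neg hus]
        apply Finset.sum_eq_zero
        intro t _
        rw [if_neg (by omega)]

end

/-- for the starting position on `n = 2s + e` balls (`s, e ≥ 1`, `e ≤ n`) the
2-adic valuation of `δ_e^(e)` equals `B(s)`; equivalently `SW_e = e + B(s)`. -/
theorem emultiplicity_deltaIt_start
    {I : Type*} [Fintype I] [DecidableEq I] (n s e : ℕ)
    (hn : n = 2 * s + e) (hs : 1 ≤ s) (he : 1 ≤ e) (hen : e ≤ n)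
    (hcard : Fintype.card I = n)
    (w : I → ℕ) (hw : ∀ i, w i = 1) :
    emultiplicity (2 : ℤ) (deltaIt w e e) = (binaryWeight s : ℕ∞) := by
  have h := deltaIt_closed hw n s e hcard hn he hen e he le_rfl 0
  simp only [Nat.mul_zero, Nat.add_zero, Nat.sub_zero, Nat.zero_le, if_pos] at h
  have hne : n - e = 2 * s := by omega
  rw [hne] at h
  rw [h, val_central s hs]
  rfl
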